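/- Fix 0 < α < β and let ξ : ℕ₊ → ℂ satisfy |ξ(n)| ≤ C·n^(−1/2−β) for all n, where C = sup_n |ξ(n)| n^(1/2+β) < ∞. Define η(n) = −n^(−1/2−α) ∑_{m=n+1}^∞ m^(−1/2+α) (1 − (n/m)^(2α)) ξ(m). Then: (1) |η(n)| ≤ (C/(β−α))·n^(−1/2−β) for all n ≥ 1; and (2) the pointwise tridiagonal action of J_α on η satisfies (J_α η)(n) = ξ(n) for all n ≥ 2 and (J_α η)(1) = ξ(1) − ∑_{m=1}^∞ ξ(m) m^(−1/2+α). -/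

import Mathlib

open scoped BigOperators

/-- Off-diagonal Jacobi parameter `a_α`. -/
noncomputable def aJ (α x : ℝ) : ℝ :=
  (x ^ (α + 1/2) * (x + 1) ^ (α + 1/2)) / (x ^ (2 * α) - (x + 1) ^ (2 * α))

/-- Diagonal Jacobi parameter `b_α`. -/
noncomputable def bJ (α x : ℝ) : ℝ :=
  (x ^ (2 * α + 1) * ((x + 1) ^ (2 * α) - (x - 1) ^ (2 * α))) /
    (((x + 1) ^ (2 * α) - x ^ (2 * α)) * (x ^ (2 * α) - (x - 1) ^ (2 * α)))


lemma bern_step {δ x : ℝ} (hδ : 0 < δ) (hx : 1 ≤ x) :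
    (x+1) ^ (-1-δ) ≤ x ^ (-δ) / δ - (x+1) ^ (-δ) / δ := by
  have hx0 : 0 < x := lt_of_lt_of_le one_pos hx
  have hx1 : 0 < x + 1 := by linarith
  set u : ℝ := 1 / (x+1) with hu
  have hu0 : 0 < u := by positivity
  have hu1 : u < 1 := by rw [hu, div_lt_one hx1]; linarith
  have h1u : 0 < 1 - u := by linarith
  have key : 1 + δ * u ≤ (1 - u) ^ (-δ) := by
    rw [Real.rpow_def_of_pos h1u]
    have hlog : Real.log (1 - u) ≤ -u := by
      have := Real.log_le_sub_one_of_pos h1u; linarith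
    have h2 : (Real.log (1-u) * -δ) + 1 ≤ Real.exp (Real.log (1-u) * -δ) :=
      Real.add_one_le_exp _
    have h3 : u * δ ≤ Real.log (1-u) * -δ := by nlinarith
    linarith
  have hxeq : x = (x+1) * (1-u) := by rw [hu]; field_simp; ring
  have hpow : 0 < (x+1) ^ (-δ) := Real.rpow_pos_of_pos hx1 _
  have hx' : x ^ (-δ) = (x+1) ^ (-δ) * (1-u) ^ (-δ) := by
    conv_lhs => rw [hxeq]
    rw [Real.mul_rpow hx1.le h1u.le]
  have hsplit : (x+1) ^ (-1-δ) = (x+1) ^ (-δ) * u := by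
    rw [show (-1-δ : ℝ) = -δ + (-1) by ring, Real.rpow_add hx1, Real.rpow_neg_one, hu]
    ring
  rw [hx', hsplit]
  have h3 : (x+1)^(-δ) * (δ*u) ≤ (x+1)^(-δ) * ((1-u)^(-δ) - 1) := by nlinarith
  calc (x+1)^(-δ) * u = ((x+1)^(-δ) * (δ*u))/δ := by field_simp
    _ ≤ ((x+1)^(-δ) * ((1-u)^(-δ)-1))/δ := by gcongr
    _ = (x+1)^(-δ)*(1-u)^(-δ)/δ - (x+1)^(-δ)/δ := by ring

set_option maxHeartbeats 1000000 in
open Filter in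
lemma tail_bound {δ : ℝ} (hδ : 0 < δ) (n : ℕ+) :
    ∑' m : ℕ+, (if n < m then ((m : ℝ)) ^ (-1-δ) else 0) ≤ (n : ℝ) ^ (-δ) / δ := by
  set g : ℕ → ℝ := fun k => (k:ℝ) ^ (-δ) / δ with hg
  set h : ℕ → ℝ := fun k => g ((n:ℕ) + k) - g ((n:ℕ) + k + 1) with hh
  have hgpos : ∀ k : ℕ, 0 ≤ g k := fun k => by
    simp only [hg]; positivity
  have hanti : ∀ k : ℕ, 0 < k → g (k+1) ≤ g k := by
    intro k hk
    simp only [hg]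
    have h1 : ((k+1:ℕ):ℝ) ^ (-δ) ≤ ((k:ℕ):ℝ) ^ (-δ) :=
      Real.rpow_le_rpow_of_nonpos (by exact_mod_cast hk) (by exact_mod_cast Nat.le_succ k)
        (by linarith)
    exact (div_le_div_iff_of_pos_right hδ).mpr (by exact_mod_cast h1)
  have hnonneg : ∀ k : ℕ, 0 ≤ h k := by
    intro k
    have := hanti ((n:ℕ) + k) (by have := n.pos; omega)
    simp only [hh]
    linarith
  have hpartial : ∀ K : ℕ, ∑ k ∈ Finset.range K, h k = g (n:ℕ) - g ((n:ℕ) + K) := by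
    intro K
    simp only [hh]
    have hassoc : ∀ k : ℕ, (n:ℕ) + k + 1 = (n:ℕ) + (k+1) := fun k => by omega
    simp only [hassoc]
    rw [Finset.sum_range_sub' (fun k => g ((n:ℕ) + k))]
    simp
  have hsummable : Summable h := by
    apply summable_of_sum_range_le (c := g (n:ℕ)) hnonneg
    intro K
    rw [hpartial K]
    linarith [hgpos ((n:ℕ) + K)]
  have htend : Tendsto (fun K : ℕ => g ((n:ℕ) + K)) atTop (nhds 0) := by
    have h1 : Tendsto (fun x : ℝ => x ^ (-δ) / δ) atTop (nhds (0/δ)) :=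
      (tendsto_rpow_neg_atTop hδ).div_const δ
    rw [zero_div] at h1
    have h2 : Tendsto (fun K : ℕ => (((n:ℕ) + K : ℕ) : ℝ)) atTop atTop := by
      apply tendsto_natCast_atTop_atTop.comp
      exact tendsto_atTop_mono (fun K => Nat.le_add_left K _) tendsto_id
    exact h1.comp h2
  have hhs : HasSum h (g (n:ℕ)) := by
    rw [hasSum_iff_tendsto_nat_of_nonneg hnonneg]
    have heq : (fun K : ℕ => ∑ i ∈ Finset.range K, h i) = fun K => g (n:ℕ) - g ((n:ℕ) + K) := by
      funext K; exact hpartial K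
    rw [heq]
    simpa using (tendsto_const_nhds (x := g (n:ℕ))).sub htend
  set i : ℕ → ℕ+ := fun k => n + Nat.succPNat k with hi
  have hicoe : ∀ k : ℕ, ((i k : ℕ+) : ℕ) = (n:ℕ) + k + 1 := by
    intro k
    show ((n + Nat.succPNat k : ℕ+) : ℕ) = _
    rw [PNat.add_coe, Nat.succPNat_coe]
    omega
  have hiinj : Function.Injective i := by
    intro a b hab
    have := congrArg (fun z : ℕ+ => (z : ℕ)) hab
    simp only [hicoe] at this
    omega
  set F : ℕ+ → ℝ := fun m => if n < m then g ((m:ℕ) - 1) - g (m:ℕ) else 0 with hF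
  have hFi : ∀ k : ℕ, F (i k) = h k := by
    intro k
    have hlt : n < i k := by
      rw [← PNat.coe_lt_coe, hicoe]; omega
    simp only [hF, if_pos hlt, hicoe, hh]
    have he : (n:ℕ) + k + 1 - 1 = (n:ℕ) + k := by omega
    rw [he]
  have hsupp : Function.support F ⊆ Set.range i := by
    intro m hm
    simp only [Function.mem_support, hF] at hm
    have hlt : n < m := by by_contra hc; simp [hc] at hm
    refine ⟨(m:ℕ) - (n:ℕ) - 1, ?_⟩
    apply PNat.coe_injective
    rw [hicoe]
    have := (PNat.coe_lt_coe n m).mpr hlt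
    omega
  have hFsum : Summable F := by
    rw [← Function.Injective.summable_iff hiinj (fun x hx => Function.notMem_support.mp
      (fun hs => hx (hsupp hs)))]
    rw [show (F ∘ i) = h from funext hFi]
    exact hsummable
  have hFtsum : ∑' m : ℕ+, F m = g (n:ℕ) := by
    rw [← Function.Injective.tsum_eq hiinj hsupp]
    rw [show (fun k => F (i k)) = h from funext hFi]
    exact hhs.tsum_eq
  have hle : ∀ m : ℕ+, (if n < m then ((m : ℝ)) ^ (-1-δ) else 0) ≤ F m := by
    intro m
    simp only [hF]
    by_cases hm : n < m
    · simp only [if_pos hm]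
      have hm2 : 2 ≤ (m : ℕ) := by
        have := (PNat.coe_lt_coe n m).mpr hm
        have := n.pos
        omega
      have hx : (1:ℝ) ≤ (m:ℝ) - 1 := by
        have : (2:ℝ) ≤ (m:ℝ) := by exact_mod_cast hm2
        linarith
      have hb := bern_step hδ hx
      rw [show ((m:ℝ) - 1) + 1 = (m:ℝ) by ring] at hb
      refine le_trans hb (le_of_eq ?_)
      simp only [hg]
      rw [Nat.cast_sub (by omega : 1 ≤ (m:ℕ))]
      norm_num
    · simp [if_neg hm]
  have h0 : ∀ m : ℕ+, 0 ≤ (if n < m then ((m:ℝ)) ^ (-1-δ) else 0) := by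
    intro m
    by_cases hm : n < m
    · simp only [if_pos hm]; positivity
    · simp [if_neg hm]
  have hfs : Summable (fun m : ℕ+ => if n < m then ((m : ℝ)) ^ (-1-δ) else 0) := by
    apply Summable.of_norm_bounded hFsum
    intro m
    rw [Real.norm_of_nonneg (h0 m)]
    exact hle m
  calc ∑' m : ℕ+, (if n < m then ((m : ℝ)) ^ (-1-δ) else 0) ≤ ∑' m, F m :=
        Summable.tsum_le_tsum hle hfs hFsum
    _ = g (n:ℕ) := hFtsum
    _ = (n : ℝ) ^ (-δ) / δ := by simp [hg]

lemma rpow_mono {α : ℝ} (hα : 0 < α) {x y : ℝ} (h0 : 0 ≤ x) (hxy : x < y) :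
    x ^ (2*α) < y ^ (2*α) := Real.rpow_lt_rpow h0 hxy (by positivity)

lemma sol_lemma {α x : ℝ} (hα : 0 < α) (hx : 2 ≤ x) :
    (aJ α (x-1) * (x-1) ^ (-(1/2:ℝ) - α) + bJ α x * x ^ (-(1/2:ℝ) - α)
      + aJ α x * (x+1) ^ (-(1/2:ℝ) - α) = 0) ∧
    (aJ α (x-1) * (x-1) ^ (-(1/2:ℝ) + α) + bJ α x * x ^ (-(1/2:ℝ) + α)
      + aJ α x * (x+1) ^ (-(1/2:ℝ) + α) = 0) := by
  have h1 : (0:ℝ) < x - 1 := by linarith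
  have h2 : (0:ℝ) < x := by linarith
  have h3 : (0:ℝ) < x + 1 := by linarith
  have hAB : (x-1)^(2*α) < x^(2*α) := rpow_mono hα h1.le (by linarith)
  have hBD : x^(2*α) < (x+1)^(2*α) := rpow_mono hα h2.le (by linarith)
  have c1 : (x-1) ^ (α + 1/2) * (x-1) ^ (-(1/2:ℝ) - α) = 1 := by
    rw [← Real.rpow_add h1, show (α + 1/2) + (-(1/2:ℝ) - α) = 0 by ring, Real.rpow_zero]
  have c2 : x ^ (α + 1/2) * x ^ (-(1/2:ℝ) - α) = 1 := by
    rw [← Real.rpow_add h2, show (α + 1/2) + (-(1/2:ℝ) - α) = 0 by ring, Real.rpow_zero]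
  have c3 : (x+1) ^ (α + 1/2) * (x+1) ^ (-(1/2:ℝ) - α) = 1 := by
    rw [← Real.rpow_add h3, show (α + 1/2) + (-(1/2:ℝ) - α) = 0 by ring, Real.rpow_zero]
  have c4 : (x-1) ^ (α + 1/2) * (x-1) ^ (-(1/2:ℝ) + α) = (x-1)^(2*α) := by
    rw [← Real.rpow_add h1, show (α + 1/2) + (-(1/2:ℝ) + α) = 2*α by ring]
  have c5 : x ^ (α + 1/2) * x ^ (-(1/2:ℝ) + α) = x^(2*α) := by
    rw [← Real.rpow_add h2, show (α + 1/2) + (-(1/2:ℝ) + α) = 2*α by ring]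
  have c6 : (x+1) ^ (α + 1/2) * (x+1) ^ (-(1/2:ℝ) + α) = (x+1)^(2*α) := by
    rw [← Real.rpow_add h3, show (α + 1/2) + (-(1/2:ℝ) + α) = 2*α by ring]
  have c7 : x ^ (2*α + 1) * x ^ (-(1/2:ℝ) - α) = x ^ (α + 1/2) := by
    rw [← Real.rpow_add h2, show (2*α + 1) + (-(1/2:ℝ) - α) = α + 1/2 by ring]
  have c8 : x ^ (2*α + 1) * x ^ (-(1/2:ℝ) + α) = x^(2*α) * x ^ (α + 1/2) := by
    rw [← Real.rpow_add h2, ← Real.rpow_add h2]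
    congr 1; ring
  have t1 : aJ α (x-1) * (x-1) ^ (-(1/2:ℝ)-α)
      = x^(α+1/2) / ((x-1)^(2*α) - x^(2*α)) := by
    unfold aJ
    rw [show x - 1 + 1 = x by ring, div_mul_eq_mul_div, mul_right_comm, c1, one_mul]
  have t2 : bJ α x * x ^ (-(1/2:ℝ)-α)
      = x^(α+1/2) * ((x+1)^(2*α) - (x-1)^(2*α))
        / (((x+1)^(2*α) - x^(2*α)) * (x^(2*α) - (x-1)^(2*α))) := by
    unfold bJ
    rw [div_mul_eq_mul_div, mul_right_comm, c7]
  have t3 : aJ α x * (x+1) ^ (-(1/2:ℝ)-α)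
      = x^(α+1/2) / (x^(2*α) - (x+1)^(2*α)) := by
    unfold aJ
    rw [div_mul_eq_mul_div, mul_assoc, c3, mul_one]
  have t4 : aJ α (x-1) * (x-1) ^ (-(1/2:ℝ)+α)
      = (x-1)^(2*α) * x^(α+1/2) / ((x-1)^(2*α) - x^(2*α)) := by
    unfold aJ
    rw [show x - 1 + 1 = x by ring, div_mul_eq_mul_div, mul_right_comm, c4]
  have t5 : bJ α x * x ^ (-(1/2:ℝ)+α)
      = x^(2*α) * x^(α+1/2) * ((x+1)^(2*α) - (x-1)^(2*α))
        / (((x+1)^(2*α) - x^(2*α)) * (x^(2*α) - (x-1)^(2*α))) := by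
    unfold bJ
    rw [div_mul_eq_mul_div, mul_right_comm, c8]
  have t6 : aJ α x * (x+1) ^ (-(1/2:ℝ)+α)
      = x^(α+1/2) * (x+1)^(2*α) / (x^(2*α) - (x+1)^(2*α)) := by
    unfold aJ
    rw [div_mul_eq_mul_div, mul_assoc, c6]
  set A := (x-1)^(2*α) with hA
  set B := x^(2*α) with hB
  set D := (x+1)^(2*α) with hD
  set s := x^(α+1/2) with hs
  have hAB' : A - B ≠ 0 := sub_ne_zero.mpr (ne_of_lt hAB)
  have hBA' : B - A ≠ 0 := sub_ne_zero.mpr (ne_of_gt hAB)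
  have hBD' : B - D ≠ 0 := sub_ne_zero.mpr (ne_of_lt hBD)
  have hDB' : D - B ≠ 0 := sub_ne_zero.mpr (ne_of_gt hBD)
  constructor
  · rw [t1, t2, t3]
    field_simp
    ring
  · rw [t4, t5, t6]
    field_simp
    ring

lemma wronskian_lemma {α x : ℝ} (hα : 0 < α) (hx : 1 ≤ x) :
    aJ α x * (x ^ (-(1/2:ℝ)-α) * (x+1) ^ (-(1/2:ℝ)+α)
      - x ^ (-(1/2:ℝ)+α) * (x+1) ^ (-(1/2:ℝ)-α)) = -1 := by
  have h2 : (0:ℝ) < x := by linarith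
  have h3 : (0:ℝ) < x + 1 := by linarith
  have hBD : x^(2*α) < (x+1)^(2*α) := rpow_mono hα h2.le (by linarith)
  have c2 : x ^ (α + 1/2) * x ^ (-(1/2:ℝ) - α) = 1 := by
    rw [← Real.rpow_add h2, show (α + 1/2) + (-(1/2:ℝ) - α) = 0 by ring, Real.rpow_zero]
  have c3 : (x+1) ^ (α + 1/2) * (x+1) ^ (-(1/2:ℝ) - α) = 1 := by
    rw [← Real.rpow_add h3, show (α + 1/2) + (-(1/2:ℝ) - α) = 0 by ring, Real.rpow_zero]
  have c5 : x ^ (α + 1/2) * x ^ (-(1/2:ℝ) + α) = x^(2*α) := by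
    rw [← Real.rpow_add h2, show (α + 1/2) + (-(1/2:ℝ) + α) = 2*α by ring]
  have c6 : (x+1) ^ (α + 1/2) * (x+1) ^ (-(1/2:ℝ) + α) = (x+1)^(2*α) := by
    rw [← Real.rpow_add h3, show (α + 1/2) + (-(1/2:ℝ) + α) = 2*α by ring]
  have hBD' : x^(2*α) - (x+1)^(2*α) ≠ 0 := sub_ne_zero.mpr (ne_of_lt hBD)
  unfold aJ
  rw [div_mul_eq_mul_div, div_eq_iff hBD']
  have expand : x ^ (α + 1/2) * (x + 1) ^ (α + 1/2) *
      (x ^ (-(1/2:ℝ)-α) * (x+1) ^ (-(1/2:ℝ)+α) - x ^ (-(1/2:ℝ)+α) * (x+1) ^ (-(1/2:ℝ)-α))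
      = (x ^ (α + 1/2) * x ^ (-(1/2:ℝ)-α)) * ((x+1) ^ (α + 1/2) * (x+1) ^ (-(1/2:ℝ)+α))
        - (x ^ (α + 1/2) * x ^ (-(1/2:ℝ)+α)) * ((x+1) ^ (α + 1/2) * (x+1) ^ (-(1/2:ℝ)-α)) := by
    ring
  rw [expand, c2, c3, c5, c6]
  ring

lemma one_lemma {α : ℝ} (hα : 0 < α) :
    (bJ α 1 * (1:ℝ) ^ (-(1/2:ℝ)-α) + aJ α 1 * (2:ℝ) ^ (-(1/2:ℝ)-α) = 1) ∧
    (bJ α 1 * (1:ℝ) ^ (-(1/2:ℝ)+α) + aJ α 1 * (2:ℝ) ^ (-(1/2:ℝ)+α) = 0) := by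
  have hD : (1:ℝ) < (2:ℝ)^(2*α) := by
    have := rpow_mono hα (by norm_num : (0:ℝ) ≤ 1) (by norm_num : (1:ℝ) < 2)
    rwa [Real.one_rpow] at this
  have hD' : (2:ℝ)^(2*α) - 1 ≠ 0 := sub_ne_zero.mpr (ne_of_gt hD)
  have hD'' : (1:ℝ) - (2:ℝ)^(2*α) ≠ 0 := sub_ne_zero.mpr (ne_of_lt hD)
  have h2 : (0:ℝ) < 2 := by norm_num
  have c2 : (2:ℝ) ^ (α + 1/2) * (2:ℝ) ^ (-(1/2:ℝ) - α) = 1 := by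
    rw [← Real.rpow_add h2, show (α + 1/2) + (-(1/2:ℝ) - α) = 0 by ring, Real.rpow_zero]
  have c5 : (2:ℝ) ^ (α + 1/2) * (2:ℝ) ^ (-(1/2:ℝ) + α) = (2:ℝ)^(2*α) := by
    rw [← Real.rpow_add h2, show (α + 1/2) + (-(1/2:ℝ) + α) = 2*α by ring]
  have hbv : bJ α 1 = (2:ℝ)^(2*α) / ((2:ℝ)^(2*α) - 1) := by
    unfold bJ
    norm_num [Real.zero_rpow (by positivity : 2*α ≠ 0), Real.one_rpow]
  have hav : aJ α 1 = (2:ℝ)^(α+1/2) / (1 - (2:ℝ)^(2*α)) := by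
    unfold aJ
    norm_num [Real.one_rpow]
  rw [hbv, hav]
  rw [Real.one_rpow, Real.one_rpow]
  constructor
  · rw [mul_one, div_mul_eq_mul_div, c2]
    field_simp
    ring
  · rw [mul_one, div_mul_eq_mul_div, c5]
    field_simp
    ring

lemma summable_ite_of {E : Type*} [NormedAddCommGroup E] [CompleteSpace E] {f : ℕ+ → E}
    (hf : Summable f) (P : ℕ+ → Prop) [DecidablePred P] :
    Summable (fun m => if P m then f m else 0) := by
  have h := hf.indicator {m | P m}
  refine h.congr fun m => ?_
  simp only [Set.indicator_apply, Set.mem_setOf_eq]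

lemma hasSum_ite_single {f : ℕ+ → ℂ} (k : ℕ+) :
    HasSum (fun m : ℕ+ => if m = k then f m else 0) (f k) := by
  have he : (fun m : ℕ+ => if m = k then f m else 0) = fun m => if m = k then f k else 0 := by
    funext m; split_ifs with h
    · rw [h]
    · rfl
  rw [he]
  exact hasSum_ite_eq k (f k)

lemma tail_split {f : ℕ+ → ℂ} (hf : Summable f) (n : ℕ+) :
    ∑' m : ℕ+, (if n < m then f m else 0)
      = (∑' m : ℕ+, (if n + 1 < m then f m else 0)) + f (n + 1) := by
  have h1 : Summable (fun m : ℕ+ => if n+1 < m then f m else 0) := summable_ite_of hf _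
  have h2 := hasSum_ite_single (f := f) (n+1)
  have hco : ((n + 1 : ℕ+) : ℕ) = (n:ℕ) + 1 := by rw [PNat.add_coe, PNat.one_coe]
  have hpt : ∀ m : ℕ+, (if n < m then f m else 0)
      = (if n+1 < m then f m else 0) + (if m = n+1 then f m else 0) := by
    intro m
    by_cases hm1 : m = n + 1
    · subst hm1
      have ha : n < n + 1 := by rw [← PNat.coe_lt_coe, hco]; omega
      have hb : ¬ (n + 1 < n + 1) := lt_irrefl _
      rw [if_pos ha, if_neg hb, if_pos rfl, zero_add]
    · by_cases hm2 : n < m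
      · have hmn : (m:ℕ) ≠ (n:ℕ) + 1 := by
          intro hc
          exact hm1 (PNat.coe_injective (by rw [hco]; exact hc))
        have ha : n + 1 < m := by
          rw [← PNat.coe_lt_coe, hco]
          have := (PNat.coe_lt_coe n m).mpr hm2
          omega
        rw [if_pos hm2, if_pos ha, if_neg hm1, add_zero]
      · have ha : ¬ (n + 1 < m) := by
          intro hc
          apply hm2
          rw [← PNat.coe_lt_coe] at hc ⊢
          rw [hco] at hc
          omega
        rw [if_neg hm2, if_neg ha, if_neg hm1, add_zero]
  rw [tsum_congr hpt, Summable.tsum_add h1 h2.summable, h2.tsum_eq]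

lemma summable_pnat_rpow {r : ℝ} (hr : r < -1) : Summable (fun m : ℕ+ => (m : ℝ) ^ r) := by
  have h : Summable (fun n : ℕ => (n : ℝ) ^ r) := Real.summable_nat_rpow.2 hr
  exact h.comp_injective PNat.coe_injective


set_option maxHeartbeats 1600000 in
/-- The auxiliary Volterra-type operator: if `|ξ(n)| ≤ C n^(-1/2-β)` with `0 < α < β`, then
`η(n) = -n^(-1/2-α) ∑_{m>n} m^(-1/2+α)(1-(n/m)^(2α)) ξ(m)` satisfies
`|η(n)| ≤ (C/(β-α)) n^(-1/2-β)`, `(J_α η)(n) = ξ(n)` for `n ≥ 2`, and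
`(J_α η)(1) = ξ(1) - ∑_m ξ(m) m^(-1/2+α)`. -/
theorem volterra_operator_estimate (α β : ℝ) (hα : 0 < α) (hβ : α < β)
    (ξ : ℕ+ → ℂ) (C : ℝ) (hC : ∀ n : ℕ+, ‖ξ n‖ * (n : ℝ) ^ ((1/2 : ℝ) + β) ≤ C)
    (η : ℕ+ → ℂ)
    (hη : ∀ n : ℕ+, η n = -(((n : ℝ) ^ (-(1/2 : ℝ) - α) : ℝ) : ℂ) *
      ∑' m : ℕ+, if n < m then
        (((m : ℝ) ^ (-(1/2 : ℝ) + α) : ℝ) : ℂ)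
          * (1 - ((((n : ℝ) / (m : ℝ)) ^ (2 * α) : ℝ) : ℂ)) * ξ m
      else 0) :
    (∀ n : ℕ+, ‖η n‖ ≤ (C / (β - α)) * (n : ℝ) ^ (-(1/2 : ℝ) - β)) ∧
    (∀ n : ℕ+, 2 ≤ n →
      (aJ α ((n : ℝ) - 1) : ℂ) * η (n - 1) + (bJ α (n : ℝ) : ℂ) * η n
        + (aJ α (n : ℝ) : ℂ) * η (n + 1) = ξ n) ∧
    (bJ α 1 : ℂ) * η 1 + (aJ α 1 : ℂ) * η 2
      = ξ 1 - ∑' m : ℕ+, ξ m * (((m : ℝ) ^ (-(1/2 : ℝ) + α) : ℝ) : ℂ) := by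
  have hδ : 0 < β - α := sub_pos.2 hβ
  have hpos : ∀ m : ℕ+, (0:ℝ) < (m:ℝ) := fun m => by exact_mod_cast m.pos
  have hC0 : 0 ≤ C := le_trans (by positivity) (hC 1)
  have hξ : ∀ m : ℕ+, ‖ξ m‖ ≤ C * (m:ℝ) ^ (-(1/2:ℝ) - β) := by
    intro m
    have h1 := hC m
    have h2 : (0:ℝ) < (m:ℝ) ^ ((1/2:ℝ) + β) := Real.rpow_pos_of_pos (hpos m) _
    rw [← le_div_iff₀ h2] at h1
    refine le_trans h1 (le_of_eq ?_)
    rw [div_eq_mul_inv, ← Real.rpow_neg (hpos m).le,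
      show -((1/2:ℝ) + β) = -(1/2:ℝ) - β by ring]
  have hqsum : Summable (fun m : ℕ+ => (((m:ℝ) ^ (-(1/2:ℝ) + α) : ℝ) : ℂ) * ξ m) := by
    apply Summable.of_norm_bounded (g := fun m : ℕ+ => C * (m:ℝ) ^ (α - β - 1))
      ((summable_pnat_rpow (by linarith : α - β - 1 < -1)).mul_left C)
    intro m
    rw [norm_mul, Complex.norm_real, Real.norm_of_nonneg (Real.rpow_nonneg (hpos m).le _)]
    calc (m:ℝ) ^ (-(1/2:ℝ) + α) * ‖ξ m‖
        ≤ (m:ℝ) ^ (-(1/2:ℝ) + α) * (C * (m:ℝ) ^ (-(1/2:ℝ) - β)) :=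
          mul_le_mul_of_nonneg_left (hξ m) (Real.rpow_nonneg (hpos m).le _)
      _ = C * (m:ℝ) ^ (α - β - 1) := by
          rw [show (m:ℝ) ^ (-(1/2:ℝ) + α) * (C * (m:ℝ) ^ (-(1/2:ℝ) - β))
              = C * ((m:ℝ) ^ (-(1/2:ℝ) + α) * (m:ℝ) ^ (-(1/2:ℝ) - β)) by ring,
            ← Real.rpow_add (hpos m),
            show (-(1/2:ℝ) + α) + (-(1/2:ℝ) - β) = α - β - 1 by ring]
  have hpsum : Summable (fun m : ℕ+ => (((m:ℝ) ^ (-(1/2:ℝ) - α) : ℝ) : ℂ) * ξ m) := by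
    apply Summable.of_norm_bounded (g := fun m : ℕ+ => C * (m:ℝ) ^ (-1 - α - β))
      ((summable_pnat_rpow (by linarith : -1 - α - β < -1)).mul_left C)
    intro m
    rw [norm_mul, Complex.norm_real, Real.norm_of_nonneg (Real.rpow_nonneg (hpos m).le _)]
    calc (m:ℝ) ^ (-(1/2:ℝ) - α) * ‖ξ m‖
        ≤ (m:ℝ) ^ (-(1/2:ℝ) - α) * (C * (m:ℝ) ^ (-(1/2:ℝ) - β)) :=
          mul_le_mul_of_nonneg_left (hξ m) (Real.rpow_nonneg (hpos m).le _)
      _ = C * (m:ℝ) ^ (-1 - α - β) := by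
          rw [show (m:ℝ) ^ (-(1/2:ℝ) - α) * (C * (m:ℝ) ^ (-(1/2:ℝ) - β))
              = C * ((m:ℝ) ^ (-(1/2:ℝ) - α) * (m:ℝ) ^ (-(1/2:ℝ) - β)) by ring,
            ← Real.rpow_add (hpos m),
            show (-(1/2:ℝ) - α) + (-(1/2:ℝ) - β) = -1 - α - β by ring]
  set Sq : ℕ+ → ℂ := fun k => ∑' m : ℕ+,
    if k < m then (((m:ℝ) ^ (-(1/2:ℝ) + α) : ℝ) : ℂ) * ξ m else 0 with hSq
  set Sp : ℕ+ → ℂ := fun k => ∑' m : ℕ+,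
    if k < m then (((m:ℝ) ^ (-(1/2:ℝ) - α) : ℝ) : ℂ) * ξ m else 0 with hSp
  have hrepr : ∀ n : ℕ+, η n = -(((n:ℝ) ^ (-(1/2:ℝ) - α) : ℝ) : ℂ) * Sq n
      + (((n:ℝ) ^ (-(1/2:ℝ) + α) : ℝ) : ℂ) * Sp n := by
    intro n
    rw [hη n]
    have hker : ∀ m : ℕ+, (if n < m then (((m:ℝ) ^ (-(1/2:ℝ) + α) : ℝ) : ℂ)
          * (1 - ((((n:ℝ) / (m:ℝ)) ^ (2 * α) : ℝ) : ℂ)) * ξ m else 0)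
        = (if n < m then (((m:ℝ) ^ (-(1/2:ℝ) + α) : ℝ) : ℂ) * ξ m else 0)
          - (((n:ℝ) ^ (2*α) : ℝ) : ℂ)
            * (if n < m then (((m:ℝ) ^ (-(1/2:ℝ) - α) : ℝ) : ℂ) * ξ m else 0) := by
      intro m
      by_cases h : n < m
      · simp only [if_pos h]
        have hreal : (m:ℝ) ^ (-(1/2:ℝ) + α) * ((n:ℝ) / (m:ℝ)) ^ (2*α)
            = (n:ℝ)^(2*α) * (m:ℝ) ^ (-(1/2:ℝ) - α) := by
          rw [Real.div_rpow (hpos n).le (hpos m).le,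
            show (m:ℝ)^(-(1/2:ℝ)+α) * ((n:ℝ)^(2*α) / (m:ℝ)^(2*α))
              = (n:ℝ)^(2*α) * ((m:ℝ)^(-(1/2:ℝ)+α) / (m:ℝ)^(2*α)) by ring,
            ← Real.rpow_sub (hpos m),
            show (-(1/2:ℝ)+α) - 2*α = -(1/2:ℝ) - α by ring]
        have hCC : (((m:ℝ) ^ (-(1/2:ℝ) + α) : ℝ) : ℂ) * ((((n:ℝ)/(m:ℝ))^(2*α) : ℝ) : ℂ)
            = (((n:ℝ)^(2*α) : ℝ) : ℂ) * (((m:ℝ) ^ (-(1/2:ℝ) - α) : ℝ) : ℂ) := by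
          exact_mod_cast congrArg Complex.ofReal hreal
        linear_combination (-(ξ m)) * hCC
      · simp only [if_neg h, mul_zero, sub_zero]
    rw [tsum_congr hker,
      Summable.tsum_sub (summable_ite_of hqsum _) ((summable_ite_of hpsum _).mul_left _),
      tsum_mul_left]
    have hpq : (((n:ℝ)^(-(1/2:ℝ)-α) : ℝ) : ℂ) * (((n:ℝ)^(2*α) : ℝ) : ℂ)
        = (((n:ℝ)^(-(1/2:ℝ)+α) : ℝ) : ℂ) := by
      have : (n:ℝ)^(-(1/2:ℝ)-α) * (n:ℝ)^(2*α) = (n:ℝ)^(-(1/2:ℝ)+α) := by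
        rw [← Real.rpow_add (hpos n), show (-(1/2:ℝ)-α) + 2*α = -(1/2:ℝ)+α by ring]
      exact_mod_cast congrArg Complex.ofReal this
    show -(((n:ℝ) ^ (-(1/2:ℝ) - α) : ℝ) : ℂ)
        * (Sq n - (((n:ℝ) ^ (2*α) : ℝ) : ℂ) * Sp n)
      = -(((n:ℝ) ^ (-(1/2:ℝ) - α) : ℝ) : ℂ) * Sq n
        + (((n:ℝ) ^ (-(1/2:ℝ) + α) : ℝ) : ℂ) * Sp n
    linear_combination (Sp n) * hpq
  refine ⟨?_, ?_, ?_⟩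
  · -- Part 1: the bound
    intro n
    rw [hη n, norm_mul, norm_neg, Complex.norm_real,
      Real.norm_of_nonneg (Real.rpow_nonneg (hpos n).le _)]
    have hbound : ∀ m : ℕ+, ‖(if n < m then (((m:ℝ) ^ (-(1/2:ℝ) + α) : ℝ) : ℂ)
          * (1 - ((((n:ℝ) / (m:ℝ)) ^ (2 * α) : ℝ) : ℂ)) * ξ m else 0)‖
        ≤ (if n < m then C * (m:ℝ) ^ (-1-(β-α)) else 0) := by
      intro m
      by_cases h : n < m
      · simp only [if_pos h, norm_mul, Complex.norm_real]
        have hr0 : 0 ≤ ((n:ℝ)/(m:ℝ)) ^ (2*α) := Real.rpow_nonneg (by positivity) _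
        have hr1 : ((n:ℝ)/(m:ℝ)) ^ (2*α) ≤ 1 := by
          apply Real.rpow_le_one (by positivity)
          · rw [div_le_one (hpos m)]
            have := (PNat.coe_lt_coe n m).mpr h
            exact_mod_cast this.le
          · positivity
        have h2 : ‖(1 : ℂ) - ((((n:ℝ)/(m:ℝ))^(2*α) : ℝ) : ℂ)‖ ≤ 1 := by
          rw [show (1 : ℂ) - ((((n:ℝ)/(m:ℝ))^(2*α) : ℝ) : ℂ)
              = (((1 - ((n:ℝ)/(m:ℝ))^(2*α) : ℝ)) : ℂ) by push_cast; ring,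
            Complex.norm_real, Real.norm_of_nonneg (by linarith)]
          linarith
        calc ‖(m:ℝ) ^ (-(1/2:ℝ) + α)‖ * ‖(1 : ℂ) - ((((n:ℝ)/(m:ℝ))^(2*α) : ℝ) : ℂ)‖ * ‖ξ m‖
            ≤ (m:ℝ) ^ (-(1/2:ℝ) + α) * 1 * (C * (m:ℝ) ^ (-(1/2:ℝ) - β)) := by
              apply mul_le_mul
              · apply mul_le_mul _ h2 (norm_nonneg _) (Real.rpow_nonneg (hpos m).le _)
                rw [Real.norm_of_nonneg (Real.rpow_nonneg (hpos m).le _)]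
              · exact hξ m
              · exact norm_nonneg _
              · positivity
          _ = C * (m:ℝ) ^ (-1-(β-α)) := by
              rw [show (m:ℝ) ^ (-(1/2:ℝ) + α) * 1 * (C * (m:ℝ) ^ (-(1/2:ℝ) - β))
                  = C * ((m:ℝ) ^ (-(1/2:ℝ) + α) * (m:ℝ) ^ (-(1/2:ℝ) - β)) by ring,
                ← Real.rpow_add (hpos m),
                show (-(1/2:ℝ) + α) + (-(1/2:ℝ) - β) = -1-(β-α) by ring]
      · simp [if_neg h]
    have hsum2 : Summable (fun m : ℕ+ => if n < m then C * (m:ℝ) ^ (-1-(β-α)) else 0) :=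
      summable_ite_of (f := fun m : ℕ+ => C * (m:ℝ) ^ (-1-(β-α)))
        ((summable_pnat_rpow (by linarith : -1-(β-α) < -1)).mul_left C) _
    have hnorm_sum : Summable (fun m : ℕ+ => ‖(if n < m then (((m:ℝ) ^ (-(1/2:ℝ) + α) : ℝ) : ℂ)
          * (1 - ((((n:ℝ) / (m:ℝ)) ^ (2 * α) : ℝ) : ℂ)) * ξ m else 0)‖) :=
      Summable.of_nonneg_of_le (fun m => norm_nonneg _) hbound hsum2
    have key : ‖∑' m : ℕ+, (if n < m then (((m:ℝ) ^ (-(1/2:ℝ) + α) : ℝ) : ℂ)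
          * (1 - ((((n:ℝ) / (m:ℝ)) ^ (2 * α) : ℝ) : ℂ)) * ξ m else 0)‖
        ≤ C * ((n:ℝ) ^ (-(β-α)) / (β-α)) := by
      calc ‖∑' m : ℕ+, (if n < m then (((m:ℝ) ^ (-(1/2:ℝ) + α) : ℝ) : ℂ)
            * (1 - ((((n:ℝ) / (m:ℝ)) ^ (2 * α) : ℝ) : ℂ)) * ξ m else 0)‖
          ≤ ∑' m : ℕ+, ‖(if n < m then (((m:ℝ) ^ (-(1/2:ℝ) + α) : ℝ) : ℂ)
            * (1 - ((((n:ℝ) / (m:ℝ)) ^ (2 * α) : ℝ) : ℂ)) * ξ m else 0)‖ :=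
            norm_tsum_le_tsum_norm hnorm_sum
        _ ≤ ∑' m : ℕ+, (if n < m then C * (m:ℝ) ^ (-1-(β-α)) else 0) :=
            Summable.tsum_le_tsum hbound hnorm_sum hsum2
        _ = C * ∑' m : ℕ+, (if n < m then (m:ℝ) ^ (-1-(β-α)) else 0) := by
            rw [← tsum_mul_left]
            congr 1
            funext m
            split_ifs <;> simp
        _ ≤ C * ((n:ℝ) ^ (-(β-α)) / (β-α)) :=
            mul_le_mul_of_nonneg_left (tail_bound hδ n) hC0
    calc (n:ℝ) ^ (-(1/2:ℝ) - α) * ‖∑' m : ℕ+, (if n < m then (((m:ℝ) ^ (-(1/2:ℝ) + α) : ℝ) : ℂ)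
          * (1 - ((((n:ℝ) / (m:ℝ)) ^ (2 * α) : ℝ) : ℂ)) * ξ m else 0)‖
        ≤ (n:ℝ) ^ (-(1/2:ℝ) - α) * (C * ((n:ℝ) ^ (-(β-α)) / (β-α))) :=
          mul_le_mul_of_nonneg_left key (Real.rpow_nonneg (hpos n).le _)
      _ = C / (β-α) * (n:ℝ) ^ (-(1/2:ℝ) - β) := by
          rw [show (n:ℝ) ^ (-(1/2:ℝ) - α) * (C * ((n:ℝ) ^ (-(β-α)) / (β-α)))
              = C / (β-α) * ((n:ℝ) ^ (-(1/2:ℝ) - α) * (n:ℝ) ^ (-(β-α))) by ring,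
            ← Real.rpow_add (hpos n),
            show (-(1/2:ℝ) - α) + -(β-α) = -(1/2:ℝ) - β by ring]
  · -- Part 2
    intro n hn
    have h1n : (1:ℕ+) < n := lt_of_lt_of_le (by decide) hn
    have hsub : n - 1 + 1 = n := PNat.sub_add_of_lt h1n
    have h2r : (2:ℝ) ≤ (n:ℝ) := by
      have h' : (2:ℕ) ≤ (n:ℕ) := (PNat.coe_le_coe 2 n).mpr hn
      exact_mod_cast h'
    have hc1 : ((n - 1 : ℕ+) : ℝ) = (n:ℝ) - 1 := by
      have h' : ((n-1:ℕ+):ℕ) = (n:ℕ) - 1 := by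
        rw [PNat.sub_coe, if_pos h1n, PNat.one_coe]
      have h2 := congrArg (fun k : ℕ => (k : ℝ)) h'
      simpa [Nat.cast_sub n.one_le] using h2
    have hc2 : ((n + 1 : ℕ+) : ℝ) = (n:ℝ) + 1 := by
      rw [show ((n + 1 : ℕ+) : ℝ) = (((n+1:ℕ+):ℕ) : ℝ) from rfl, PNat.add_coe, PNat.one_coe]
      push_cast
      ring
    -- tail recursions
    have hSqm : Sq (n-1) = Sq n + (((n:ℝ) ^ (-(1/2:ℝ) + α) : ℝ) : ℂ) * ξ n := by
      have h := tail_split hqsum (n-1)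
      rw [hsub] at h
      exact h
    have hSpm : Sp (n-1) = Sp n + (((n:ℝ) ^ (-(1/2:ℝ) - α) : ℝ) : ℂ) * ξ n := by
      have h := tail_split hpsum (n-1)
      rw [hsub] at h
      exact h
    have hSqp : Sq (n+1) = Sq n
        - ((((n+1:ℕ+):ℝ) ^ (-(1/2:ℝ) + α) : ℝ) : ℂ) * ξ (n+1) := by
      have h := tail_split hqsum n
      rw [show (Sq n : ℂ) = ∑' m : ℕ+,
        (if n < m then (((m:ℝ) ^ (-(1/2:ℝ) + α) : ℝ) : ℂ) * ξ m else 0) from rfl,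
        show (Sq (n+1) : ℂ) = ∑' m : ℕ+,
        (if n+1 < m then (((m:ℝ) ^ (-(1/2:ℝ) + α) : ℝ) : ℂ) * ξ m else 0) from rfl]
      linear_combination -h
    have hSpp : Sp (n+1) = Sp n
        - ((((n+1:ℕ+):ℝ) ^ (-(1/2:ℝ) - α) : ℝ) : ℂ) * ξ (n+1) := by
      have h := tail_split hpsum n
      rw [show (Sp n : ℂ) = ∑' m : ℕ+,
        (if n < m then (((m:ℝ) ^ (-(1/2:ℝ) - α) : ℝ) : ℂ) * ξ m else 0) from rfl,
        show (Sp (n+1) : ℂ) = ∑' m : ℕ+,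
        (if n+1 < m then (((m:ℝ) ^ (-(1/2:ℝ) - α) : ℝ) : ℂ) * ξ m else 0) from rfl]
      linear_combination -h
    -- identities
    obtain ⟨hp_id, hq_id⟩ := sol_lemma hα h2r
    rw [← hc1, ← hc2] at hp_id hq_id
    have hw := wronskian_lemma hα (show (1:ℝ) ≤ (n:ℝ) - 1 by linarith)
    rw [show (n:ℝ) - 1 + 1 = (n:ℝ) by ring] at hw
    rw [← hc1] at hw
    -- complex versions
    have hpC : (aJ α ((n:ℝ) - 1) : ℂ) * ((((n-1:ℕ+):ℝ) ^ (-(1/2:ℝ) - α) : ℝ) : ℂ)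
        + (bJ α (n:ℝ) : ℂ) * (((n:ℝ) ^ (-(1/2:ℝ) - α) : ℝ) : ℂ)
        + (aJ α (n:ℝ) : ℂ) * ((((n+1:ℕ+):ℝ) ^ (-(1/2:ℝ) - α) : ℝ) : ℂ) = 0 := by
      rw [← hc1]
      exact_mod_cast congrArg Complex.ofReal hp_id
    have hqC : (aJ α ((n:ℝ) - 1) : ℂ) * ((((n-1:ℕ+):ℝ) ^ (-(1/2:ℝ) + α) : ℝ) : ℂ)
        + (bJ α (n:ℝ) : ℂ) * (((n:ℝ) ^ (-(1/2:ℝ) + α) : ℝ) : ℂ)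
        + (aJ α (n:ℝ) : ℂ) * ((((n+1:ℕ+):ℝ) ^ (-(1/2:ℝ) + α) : ℝ) : ℂ) = 0 := by
      rw [← hc1]
      exact_mod_cast congrArg Complex.ofReal hq_id
    have hwC : (aJ α ((n:ℝ) - 1) : ℂ)
        * (((((n-1:ℕ+):ℝ) ^ (-(1/2:ℝ) - α) : ℝ) : ℂ) * (((n:ℝ) ^ (-(1/2:ℝ) + α) : ℝ) : ℂ)
          - ((((n-1:ℕ+):ℝ) ^ (-(1/2:ℝ) + α) : ℝ) : ℂ) * (((n:ℝ) ^ (-(1/2:ℝ) - α) : ℝ) : ℂ))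
        = -1 := by
      rw [← hc1]
      exact_mod_cast congrArg Complex.ofReal hw
    rw [hrepr (n-1), hrepr n, hrepr (n+1), hSqm, hSpm, hSqp, hSpp]
    linear_combination (-(Sq n)) * hpC + (Sp n) * hqC + (-(ξ n)) * hwC
  · -- Part 3: boundary condition at n = 1
    have h12 : (1:ℕ+) + 1 = 2 := rfl
    have hb1 : ((1:ℕ+):ℝ) = (1:ℝ) := by norm_num
    have hb2 : ((2:ℕ+):ℝ) = (2:ℝ) := by norm_num
    -- split off the full sum
    have hfull : ∑' m : ℕ+, ξ m * (((m:ℝ) ^ (-(1/2:ℝ) + α) : ℝ) : ℂ)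
        = ((((1:ℕ+):ℝ) ^ (-(1/2:ℝ) + α) : ℝ) : ℂ) * ξ 1 + Sq 1 := by
      have hcomm : ∀ m : ℕ+, ξ m * (((m:ℝ) ^ (-(1/2:ℝ) + α) : ℝ) : ℂ)
          = (if m = 1 then (((m:ℝ) ^ (-(1/2:ℝ) + α) : ℝ) : ℂ) * ξ m else 0)
            + (if (1:ℕ+) < m then (((m:ℝ) ^ (-(1/2:ℝ) + α) : ℝ) : ℂ) * ξ m else 0) := by
        intro m
        rcases eq_or_lt_of_le m.one_le with h|h
        · rw [if_pos h.symm, if_neg (by rw [← h]; exact lt_irrefl 1), add_zero, mul_comm]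
        · rw [if_neg (by intro hc; rw [hc] at h; exact lt_irrefl 1 h), if_pos h, zero_add,
            mul_comm]
      rw [tsum_congr hcomm,
        Summable.tsum_add (hasSum_ite_single (f := fun m : ℕ+ =>
          (((m:ℝ) ^ (-(1/2:ℝ) + α) : ℝ) : ℂ) * ξ m) 1).summable (summable_ite_of hqsum _),
        (hasSum_ite_single (f := fun m : ℕ+ =>
          (((m:ℝ) ^ (-(1/2:ℝ) + α) : ℝ) : ℂ) * ξ m) 1).tsum_eq]
    rw [hfull]
    -- tail recursions at 1
    have hSq2 : Sq 2 = Sq 1 - ((((2:ℕ+):ℝ) ^ (-(1/2:ℝ) + α) : ℝ) : ℂ) * ξ 2 := by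
      have h := tail_split hqsum 1
      rw [h12] at h
      rw [show (Sq 1 : ℂ) = ∑' m : ℕ+,
        (if 1 < m then (((m:ℝ) ^ (-(1/2:ℝ) + α) : ℝ) : ℂ) * ξ m else 0) from rfl,
        show (Sq 2 : ℂ) = ∑' m : ℕ+,
        (if 2 < m then (((m:ℝ) ^ (-(1/2:ℝ) + α) : ℝ) : ℂ) * ξ m else 0) from rfl]
      linear_combination -h
    have hSp2 : Sp 2 = Sp 1 - ((((2:ℕ+):ℝ) ^ (-(1/2:ℝ) - α) : ℝ) : ℂ) * ξ 2 := by
      have h := tail_split hpsum 1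
      rw [h12] at h
      rw [show (Sp 1 : ℂ) = ∑' m : ℕ+,
        (if 1 < m then (((m:ℝ) ^ (-(1/2:ℝ) - α) : ℝ) : ℂ) * ξ m else 0) from rfl,
        show (Sp 2 : ℂ) = ∑' m : ℕ+,
        (if 2 < m then (((m:ℝ) ^ (-(1/2:ℝ) - α) : ℝ) : ℂ) * ξ m else 0) from rfl]
      linear_combination -h
    obtain ⟨hp1, hq1⟩ := one_lemma hα
    have hpC : (bJ α 1 : ℂ) * ((((1:ℕ+):ℝ) ^ (-(1/2:ℝ) - α) : ℝ) : ℂ)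
        + (aJ α 1 : ℂ) * ((((2:ℕ+):ℝ) ^ (-(1/2:ℝ) - α) : ℝ) : ℂ) = 1 := by
      rw [hb1, hb2]
      exact_mod_cast congrArg Complex.ofReal hp1
    have hqC : (bJ α 1 : ℂ) * ((((1:ℕ+):ℝ) ^ (-(1/2:ℝ) + α) : ℝ) : ℂ)
        + (aJ α 1 : ℂ) * ((((2:ℕ+):ℝ) ^ (-(1/2:ℝ) + α) : ℝ) : ℂ) = 0 := by
      rw [hb1, hb2]
      exact_mod_cast congrArg Complex.ofReal hq1
    have h1qC : ((((1:ℕ+):ℝ) ^ (-(1/2:ℝ) + α) : ℝ) : ℂ) = 1 := by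
      rw [hb1, Real.one_rpow]
      norm_num
    rw [hrepr 1, hrepr 2, hSq2, hSp2]
    linear_combination (-(Sq 1)) * hpC + (Sp 1) * hqC + (ξ 1) * h1qC
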